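/- Let A be an integral domain which is finitely generated as a ℂ-algebra and is a Dedekind domain, and let I and J be nonzero ideals of A. Then A[I] and A[J] are isomorphic as ℂ-algebras if and only if there exist a ℂ-algebra automorphism τ of A and an additive bijection g: I → J satisfying g(a·m) = τ(a)·g(m) for all a ∈ A and m ∈ I (that is, J is isomorphic to the twist I^τ of I by τ). -/
import Mathlib


universe u

section OPE

variable (A : Type u) [CommRing A] [Algebra ℂ A] (I : Type u) [AddCommGroup I] [Module A I]

/-- The one-point extension `A[I]`: triples `(a, b, c)` with `a ∈ A`, `b ∈ I`, `c ∈ ℂ`,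
thought of as upper-triangular matrices `[[a, b], [0, c]]`. -/
abbrev OPE : Type u := A × I × ℂ

variable {A I}

/-- Multiplication of the one-point extension:
`(a,b,c)·(a',b',c') = (a a', a•b' + c'•b, c c')`, where `ℂ` acts on `I` through
`algebraMap ℂ A`. -/
def OPE.mul (x y : OPE A I) : OPE A I :=
  (x.1 * y.1, x.1 • y.2.1 + algebraMap ℂ A y.2.2 • x.2.1, x.2.2 * y.2.2)

instance OPE.instMul : Mul (OPE A I) := ⟨OPE.mul⟩

instance OPE.instOne : One (OPE A I) := ⟨(1, 0, 1)⟩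

instance OPE.instRing : Ring (OPE A I) where
  __ := (inferInstance : AddCommGroup (OPE A I))
  mul := OPE.mul
  one := (1, 0, 1)
  mul_assoc x y z := by
    show OPE.mul (OPE.mul x y) z = OPE.mul x (OPE.mul y z)
    unfold OPE.mul
    refine Prod.ext (mul_assoc _ _ _) (Prod.ext ?_ (mul_assoc _ _ _))
    show (x.1 * y.1) • z.2.1 + algebraMap ℂ A z.2.2 • (x.1 • y.2.1 + algebraMap ℂ A y.2.2 • x.2.1)
        = x.1 • (y.1 • z.2.1 + algebraMap ℂ A z.2.2 • y.2.1) + algebraMap ℂ A (y.2.2 * z.2.2) • x.2.1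
    rw [map_mul]
    module
  one_mul x := by
    show OPE.mul (1, 0, 1) x = x
    unfold OPE.mul
    simp
  mul_one x := by
    show OPE.mul x (1, 0, 1) = x
    unfold OPE.mul
    simp
  left_distrib x y z := by
    show OPE.mul x (y + z) = OPE.mul x y + OPE.mul x z
    unfold OPE.mul
    refine Prod.ext (mul_add _ _ _) (Prod.ext ?_ (mul_add _ _ _))
    show x.1 • (y.2.1 + z.2.1) + algebraMap ℂ A (y.2.2 + z.2.2) • x.2.1
        = (x.1 • y.2.1 + algebraMap ℂ A y.2.2 • x.2.1) + (x.1 • z.2.1 + algebraMap ℂ A z.2.2 • x.2.1)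
    rw [map_add]
    module
  right_distrib x y z := by
    show OPE.mul (x + y) z = OPE.mul x z + OPE.mul y z
    unfold OPE.mul
    refine Prod.ext (add_mul _ _ _) (Prod.ext ?_ (add_mul _ _ _))
    show (x.1 + y.1) • z.2.1 + algebraMap ℂ A z.2.2 • (x.2.1 + y.2.1)
        = (x.1 • z.2.1 + algebraMap ℂ A z.2.2 • x.2.1) + (y.1 • z.2.1 + algebraMap ℂ A z.2.2 • y.2.1)
    module
  zero_mul x := by
    show OPE.mul 0 x = 0
    unfold OPE.mul
    simp
  mul_zero x := by
    show OPE.mul x 0 = 0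
    unfold OPE.mul
    simp

/-- The structure map `ℂ → A[I]`, `c ↦ (algebraMap ℂ A c, 0, c)`. -/
def OPE.algMap : ℂ →+* OPE A I where
  toFun c := (algebraMap ℂ A c, 0, c)
  map_one' := by simp only [map_one]; rfl
  map_mul' c d := by
    show _ = OPE.mul _ _
    unfold OPE.mul
    simp
  map_zero' := by simp only [map_zero]; rfl
  map_add' c d := by
    have : ∀ x y : OPE A I, x + y = (x.1 + y.1, x.2.1 + y.2.1, x.2.2 + y.2.2) := fun x y => rfl
    rw [this]
    simp only [map_add, add_zero]

instance OPE.instAlgebra : Algebra ℂ (OPE A I) :=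
  (OPE.algMap (A := A) (I := I)).toAlgebra' (by
    intro c x
    show OPE.mul _ _ = OPE.mul _ _
    unfold OPE.mul OPE.algMap
    simp [mul_comm])

/-- The idempotent `e = [[1,0],[0,0]]` of `A[I]`. -/
def OPE.e : OPE A I := (1, 0, 0)

/-- The idempotent `e_∞ = [[0,0],[0,1]]` of `A[I]`. -/
def OPE.einf : OPE A I := (0, 0, 1)

end OPE

section Aux

variable {A : Type u} [CommRing A] [Algebra ℂ A] {M : Type u} [AddCommGroup M] [Module A M]

lemma OPE.mul_def' (x y : OPE A M) :
    x * y = (x.1 * y.1, x.1 • y.2.1 + algebraMap ℂ A y.2.2 • x.2.1, x.2.2 * y.2.2) := rfl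

lemma OPE.algebraMap_def' (z : ℂ) :
    algebraMap ℂ (OPE A M) z = (algebraMap ℂ A z, 0, z) := rfl

lemma OPE.sq_eq_zero_iff [IsDomain A] (x : OPE A M) :
    x * x = 0 ↔ x.1 = 0 ∧ x.2.2 = 0 := by
  constructor
  · intro h
    exact ⟨mul_self_eq_zero.mp (congrArg Prod.fst h),
      mul_self_eq_zero.mp (congrArg (fun p => p.2.2) h)⟩
  · rintro ⟨h1, h3⟩
    rw [OPE.mul_def', h1, h3]
    exact Prod.ext (by simp) (Prod.ext (by simp) (by simp))

lemma OPE.corner (y : OPE A M) :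
    ((1, 0, 0) : OPE A M) * y * (1, 0, 0) = (y.1, 0, 0) := by
  rw [OPE.mul_def', OPE.mul_def']
  exact Prod.ext (by simp) (Prod.ext (by simp) (by simp))

lemma OPE.single_mul (a b : A) :
    ((a, 0, 0) : OPE A M) * (b, 0, 0) = (a * b, 0, 0) := by
  rw [OPE.mul_def']
  exact Prod.ext rfl (Prod.ext (by simp) (by simp))

lemma OPE.single_add (a b : A) :
    ((a, 0, 0) : OPE A M) + (b, 0, 0) = (a + b, 0, 0) := by
  exact Prod.ext rfl (Prod.ext (by simp) (by simp))

lemma OPE.single_sub (a b : A) :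
    ((a, 0, 0) : OPE A M) - (b, 0, 0) = (a - b, 0, 0) := by
  exact Prod.ext rfl (Prod.ext (by simp) (by simp))

lemma OPE.mid_add (m m' : M) :
    ((0, m, 0) : OPE A M) + (0, m', 0) = (0, m + m', 0) := by
  exact Prod.ext (by simp) (Prod.ext rfl (by simp))

lemma OPE.mid_sq_zero [IsDomain A] (m : M) :
    ((0, m, 0) : OPE A M) * (0, m, 0) = 0 :=
  (OPE.sq_eq_zero_iff _).mpr ⟨rfl, rfl⟩

lemma OPE.single_mul_mid (a : A) (m : M) :
    ((a, 0, 0) : OPE A M) * (0, m, 0) = (0, a • m, 0) := by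
  rw [OPE.mul_def']
  exact Prod.ext (by simp) (Prod.ext (by simp) (by simp))

end Aux

/-- Let `A` be the coordinate ring of a smooth affine irreducible
curve over ℂ (an integral domain, finitely generated as a ℂ-algebra, which is a
Dedekind domain) and let `I`, `J` be nonzero ideals of `A`.  Then `A[I] ≅ A[J]` as
ℂ-algebras if and only if `J` is isomorphic to a twist `I^τ` of `I` by a ℂ-algebra
automorphism `τ` of `A`, i.e. there is an additive bijection `g : I → J` with
`g(a·m) = τ(a)·g(m)`. -/
theorem stmt11 (A : Type u) [CommRing A] [IsDomain A] [IsDedekindDomain A] [Algebra ℂ A]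
    (hfg : Algebra.FiniteType ℂ A)
    (I J : Ideal A) (hI : I ≠ ⊥) (hJ : J ≠ ⊥) :
    Nonempty (OPE A ↥I ≃ₐ[ℂ] OPE A ↥J) ↔
      ∃ (τ : A ≃ₐ[ℂ] A) (g : ↥I ≃+ ↥J), ∀ (a : A) (m : ↥I), g (a • m) = τ a • g m := by
  constructor
  · rintro ⟨φ⟩
    have hone : ((1, 0, 0) : OPE A ↥I) + (0, 0, 1) = 1 :=
      Prod.ext (by simp; rfl) (Prod.ext (by simp; rfl) (by simp; rfl))
    set e := φ (1, 0, 0) with hedef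
    have hee : e * e = e := by
      rw [hedef, ← map_mul, OPE.single_mul, mul_one]
    have he1 : e.1 * e.1 = e.1 := congrArg Prod.fst hee
    have he3 : e.2.2 * e.2.2 = e.2.2 := congrArg (fun p => p.2.2) hee
    have he1cases : e.1 = 0 ∨ e.1 = 1 := by
      have h : e.1 * (e.1 - 1) = 0 := by rw [mul_sub, he1]; ring
      rcases mul_eq_zero.mp h with h | h
      · exact Or.inl h
      · exact Or.inr (sub_eq_zero.mp h)
    rcases he1cases with he0 | he0
    · -- swap case: A is a field
      have he2 : e.2.2 = 1 := by
        have h3 : e.2.2 = 0 ∨ e.2.2 = 1 := by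
          have h : e.2.2 * (e.2.2 - 1) = 0 := by rw [mul_sub, he3]; ring
          rcases mul_eq_zero.mp h with h | h
          · exact Or.inl h
          · exact Or.inr (sub_eq_zero.mp h)
        rcases h3 with h3 | h3
        · exfalso
          have hz : e * e = 0 := (OPE.sq_eq_zero_iff _).mpr ⟨he0, h3⟩
          have he0' : e = 0 := by rw [← hee, hz]
          have : ((1, 0, 0) : OPE A ↥I) = 0 := φ.injective (by rw [map_zero, ← he0', hedef])
          exact one_ne_zero (congrArg Prod.fst this)
        · exact h3
      set θ : A → ℂ := fun a => (φ (a, 0, 0)).2.2 with hθdef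
      have hθ0 : ∀ a, θ a = 0 → a = 0 := by
        intro a ha
        have hsm : ((a, 0, 0) : OPE A ↥I) = (a, 0, 0) * (1, 0, 0) := by
          rw [OPE.single_mul, mul_one]
        have h1 : (φ (a, 0, 0)).1 = 0 := by
          conv_lhs => rw [hsm, map_mul]
          show (φ (a, 0, 0)).1 * e.1 = 0
          rw [he0, mul_zero]
        have hsq : φ (a, 0, 0) * φ (a, 0, 0) = 0 := (OPE.sq_eq_zero_iff _).mpr ⟨h1, ha⟩
        have h2 : ((a * a, 0, 0) : OPE A ↥I) = 0 :=
          φ.injective (by rw [map_zero, ← OPE.single_mul, map_mul, hsq])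
        exact mul_self_eq_zero.mp (congrArg Prod.fst h2)
      have hθ1 : θ 1 = 1 := he2
      have hθmul : ∀ a b, θ (a * b) = θ a * θ b := by
        intro a b
        have := map_mul φ ((a, 0, 0) : OPE A ↥I) (b, 0, 0)
        rw [OPE.single_mul] at this
        exact congrArg (fun p => p.2.2) this
      have hθsub : ∀ a b, θ (a - b) = θ a - θ b := by
        intro a b
        have := map_sub φ ((a, 0, 0) : OPE A ↥I) (b, 0, 0)
        rw [OPE.single_sub] at this
        exact congrArg (fun p => p.2.2) this
      have hθsurj : ∀ z : ℂ, ∃ a, θ a = z := by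
        intro z
        refine ⟨(φ.symm ((0, 0, z) : OPE A ↥J)).1, ?_⟩
        have h : φ (((φ.symm ((0, 0, z) : OPE A ↥J)).1, 0, 0) : OPE A ↥I)
            = e * (0, 0, z) * e := by
          rw [← OPE.corner (φ.symm ((0, 0, z) : OPE A ↥J)), map_mul, map_mul,
            φ.apply_symm_apply]
        have h2 : θ (φ.symm ((0, 0, z) : OPE A ↥J)).1 = e.2.2 * z * e.2.2 :=
          congrArg (fun p => p.2.2) h
        rw [h2, he2]; ring
      have hfield : IsField A := by
        refine ⟨⟨0, 1, zero_ne_one⟩, mul_comm, ?_⟩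
        intro a ha
        have hθa : θ a ≠ 0 := fun h => ha (hθ0 a h)
        obtain ⟨b, hb⟩ := hθsurj (θ a)⁻¹
        refine ⟨b, ?_⟩
        have : θ (a * b - 1) = 0 := by
          rw [hθsub, hθmul, hθ1, hb, mul_inv_cancel₀ hθa, sub_self]
        exact sub_eq_zero.mp (hθ0 _ this)
      have hItop : I = ⊤ := by
        obtain ⟨x, hxI, hx0⟩ := Submodule.exists_mem_ne_zero_of_ne_bot hI
        obtain ⟨b, hb⟩ := hfield.mul_inv_cancel hx0
        exact (Ideal.eq_top_iff_one I).mpr (hb ▸ I.mul_mem_right b hxI)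
      have hJtop : J = ⊤ := by
        obtain ⟨x, hxJ, hx0⟩ := Submodule.exists_mem_ne_zero_of_ne_bot hJ
        obtain ⟨b, hb⟩ := hfield.mul_inv_cancel hx0
        exact (Ideal.eq_top_iff_one J).mpr (hb ▸ J.mul_mem_right b hxJ)
      have hIJ : I = J := by rw [hItop, hJtop]
      subst hIJ
      exact ⟨AlgEquiv.refl, AddEquiv.refl _, fun a m => rfl⟩
    · -- main case
      have he2 : e.2.2 = 0 := by
        have h3 : e.2.2 = 0 ∨ e.2.2 = 1 := by
          have h : e.2.2 * (e.2.2 - 1) = 0 := by rw [mul_sub, he3]; ring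
          rcases mul_eq_zero.mp h with h | h
          · exact Or.inl h
          · exact Or.inr (sub_eq_zero.mp h)
        rcases h3 with h3 | h3
        · exact h3
        · exfalso
          set f := φ ((0, 0, 1) : OPE A ↥I) with hfdef
          have hef : e + f = 1 := by rw [hedef, hfdef, ← map_add, hone, map_one]
          have hf1 : f.1 = 0 := by
            have := congrArg Prod.fst hef
            show f.1 = 0
            have h1 : e.1 + f.1 = 1 := this
            rw [he0] at h1; linear_combination h1
          have hf3 : f.2.2 = 0 := by
            have h1 : e.2.2 + f.2.2 = 1 := congrArg (fun p => p.2.2) hef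
            rw [h3] at h1
            linear_combination h1
          have hff : f * f = f := by
            rw [hfdef, ← map_mul]
            congr 1
            rw [OPE.mul_def']
            exact Prod.ext (by simp) (Prod.ext (by simp) (by simp))
          have hfz : f * f = 0 := (OPE.sq_eq_zero_iff _).mpr ⟨hf1, hf3⟩
          have hf0 : f = 0 := by rw [← hff, hfz]
          have : ((0, 0, 1) : OPE A ↥I) = 0 := φ.injective (by rw [map_zero, ← hf0, hfdef])
          exact one_ne_zero (congrArg (fun p => p.2.2) this)
      set τ₀ : A → A := fun a => (φ (a, 0, 0)).1 with hτdef
      have hK : ∀ a, (φ (a, 0, 0)).2.2 = 0 := by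
        intro a
        have hsm : ((a, 0, 0) : OPE A ↥I) = (1, 0, 0) * (a, 0, 0) := by
          rw [OPE.single_mul, one_mul]
        conv_lhs => rw [hsm, map_mul]
        show e.2.2 * (φ (a, 0, 0)).2.2 = 0
        rw [he2, zero_mul]
      have hτmul : ∀ a b, τ₀ (a * b) = τ₀ a * τ₀ b := by
        intro a b
        have := map_mul φ ((a, 0, 0) : OPE A ↥I) (b, 0, 0)
        rw [OPE.single_mul] at this
        exact congrArg Prod.fst this
      have hτadd : ∀ a b, τ₀ (a + b) = τ₀ a + τ₀ b := by
        intro a b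
        have := map_add φ ((a, 0, 0) : OPE A ↥I) (b, 0, 0)
        rw [OPE.single_add] at this
        exact congrArg Prod.fst this
      have hτcomm : ∀ z : ℂ, τ₀ (algebraMap ℂ A z) = algebraMap ℂ A z := by
        intro z
        have hz : ((algebraMap ℂ A z, 0, 0) : OPE A ↥I)
            = algebraMap ℂ (OPE A ↥I) z * (1, 0, 0) := by
          rw [OPE.algebraMap_def', OPE.mul_def']
          exact Prod.ext (by simp) (Prod.ext (by simp) (by simp))
        show (φ (algebraMap ℂ A z, 0, 0)).1 = algebraMap ℂ A z
        rw [hz, map_mul, φ.commutes]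
        show (algebraMap ℂ A z) * e.1 = algebraMap ℂ A z
        rw [he0, mul_one]
      have hτinj : Function.Injective τ₀ := by
        have h0 : ∀ a, τ₀ a = 0 → a = 0 := by
          intro a ha
          have hsq : φ (a, 0, 0) * φ (a, 0, 0) = 0 := (OPE.sq_eq_zero_iff _).mpr ⟨ha, hK a⟩
          have h2 : ((a * a, 0, 0) : OPE A ↥I) = 0 :=
            φ.injective (by rw [map_zero, ← OPE.single_mul, map_mul, hsq])
          exact mul_self_eq_zero.mp (congrArg Prod.fst h2)
        intro a b hab
        have : τ₀ (a - b) = 0 := by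
          have := map_sub φ ((a, 0, 0) : OPE A ↥I) (b, 0, 0)
          rw [OPE.single_sub] at this
          have h2 : τ₀ (a - b) = τ₀ a - τ₀ b := congrArg Prod.fst this
          rw [h2, hab, sub_self]
        exact sub_eq_zero.mp (h0 _ this)
      have hτsurj : Function.Surjective τ₀ := by
        intro a'
        refine ⟨(φ.symm ((a', 0, 0) : OPE A ↥J)).1, ?_⟩
        have h : φ (((φ.symm ((a', 0, 0) : OPE A ↥J)).1, 0, 0) : OPE A ↥I)
            = e * (a', 0, 0) * e := by
          rw [← OPE.corner (φ.symm ((a', 0, 0) : OPE A ↥J)), map_mul, map_mul,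
            φ.apply_symm_apply]
        have h2 : τ₀ (φ.symm ((a', 0, 0) : OPE A ↥J)).1 = e.1 * a' * e.1 :=
          congrArg Prod.fst h
        rw [h2, he0]; ring
      have hτone : τ₀ 1 = 1 := he0
      set τA : A →ₐ[ℂ] A :=
        { toFun := τ₀, map_one' := hτone, map_mul' := hτmul,
          map_zero' := by
            show (φ ((0 : A), 0, 0)).1 = 0
            have : ((0 : A), (0 : ↥I), (0 : ℂ)) = (0 : OPE A ↥I) := rfl
            rw [this, map_zero]
            rfl,
          map_add' := hτadd, commutes' := hτcomm } with hτAdef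
      set τ : A ≃ₐ[ℂ] A := AlgEquiv.ofBijective τA ⟨hτinj, hτsurj⟩ with hτdef2
      -- the additive map g
      have hNI : ∀ m : ↥I, φ (0, m, 0) = (0, (φ (0, m, 0)).2.1, 0) := by
        intro m
        have h0 := (OPE.sq_eq_zero_iff (φ (0, m, 0))).mp
          (by rw [← map_mul, OPE.mid_sq_zero, map_zero])
        exact Prod.ext h0.1 (Prod.ext rfl h0.2)
      have hNJ : ∀ n : ↥J, φ.symm (0, n, 0) = (0, (φ.symm (0, n, 0)).2.1, 0) := by
        intro n
        have h0 := (OPE.sq_eq_zero_iff (φ.symm (0, n, 0))).mp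
          (by rw [← map_mul, OPE.mid_sq_zero, map_zero])
        exact Prod.ext h0.1 (Prod.ext rfl h0.2)
      set g : ↥I ≃+ ↥J :=
        { toFun := fun m => (φ (0, m, 0)).2.1,
          invFun := fun n => (φ.symm (0, n, 0)).2.1,
          left_inv := by
            intro m
            have h : φ.symm ((0, (φ (0, m, 0)).2.1, 0) : OPE A ↥J) = (0, m, 0) := by
              rw [← hNI m, φ.symm_apply_apply]
            exact congrArg (fun p => p.2.1) h,
          right_inv := by
            intro n
            have h : φ ((0, (φ.symm (0, n, 0)).2.1, 0) : OPE A ↥I) = (0, n, 0) := by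
              rw [← hNJ n, φ.apply_symm_apply]
            exact congrArg (fun p => p.2.1) h,
          map_add' := by
            intro m m'
            have h := map_add φ ((0, m, 0) : OPE A ↥I) (0, m', 0)
            rw [OPE.mid_add] at h
            exact congrArg (fun p => p.2.1) h } with hgdef
      refine ⟨τ, g, ?_⟩
      intro a m
      show (φ (0, a • m, 0)).2.1 = τ₀ a • (φ (0, m, 0)).2.1
      have h2 := map_mul φ ((a, 0, 0) : OPE A ↥I) (0, m, 0)
      rw [OPE.single_mul_mid, hNI m] at h2
      refine (congrArg (fun p => p.2.1) h2).trans ?_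
      show (φ (a, 0, 0)).1 • (φ (0, m, 0)).2.1 + algebraMap ℂ A 0 • (φ (a, 0, 0)).2.1
          = τ₀ a • (φ (0, m, 0)).2.1
      rw [map_zero, zero_smul, add_zero]
  · rintro ⟨τ, g, hg⟩
    have hgsymm : ∀ (a : A) (n : ↥J), g.symm (a • n) = τ.symm a • g.symm n := by
      intro a n
      apply g.injective
      rw [hg, AddEquiv.apply_symm_apply, AlgEquiv.apply_symm_apply,
        AddEquiv.apply_symm_apply]
    exact ⟨{ toFun := fun x => (τ x.1, g x.2.1, x.2.2)
             invFun := fun y => (τ.symm y.1, g.symm y.2.1, y.2.2)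
             left_inv := fun x => by simp
             right_inv := fun y => by simp
             map_mul' := fun x y => by
               rw [OPE.mul_def', OPE.mul_def']
               refine Prod.ext (map_mul τ _ _) (Prod.ext ?_ rfl)
               show g (x.1 • y.2.1 + algebraMap ℂ A y.2.2 • x.2.1)
                   = τ x.1 • g y.2.1 + algebraMap ℂ A y.2.2 • g x.2.1
               rw [map_add, hg, hg, AlgEquiv.commutes]
             map_add' := fun x y =>
               Prod.ext (map_add τ _ _) (Prod.ext (map_add g _ _) rfl)
             commutes' := fun z => by
               rw [OPE.algebraMap_def', OPE.algebraMap_def']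
               exact Prod.ext (τ.commutes z) (Prod.ext (map_zero g) rfl) }⟩
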